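/- Let A ∈ SL₃(ℂ). If the three matrices Id, A, A⁻¹ are linearly dependent over ℂ (i.e., there exist a, b, c ∈ ℂ, not all zero, with a·A + b·Id + c·A⁻¹ = 0), then A has an eigenvalue λ ∈ ℂ whose eigenspace ker(A − λ·Id) has dimension at least 2. -/

import Mathlib

open Matrix

lemma key_lemma (M : Matrix (Fin 3) (Fin 3) ℂ) (lam mu : ℂ)
    (h : (M - lam • 1) * (M - mu • 1) = 0) :
    ∃ l : ℂ, 2 ≤ Module.finrank ℂ
        (LinearMap.ker (Matrix.toLin' (M - l • 1))) := by
  by_contra hc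
  push_neg at hc
  have h1 := hc lam
  have h2 := hc mu
  set f := Matrix.toLin' (M - lam • 1) with hf
  set g := Matrix.toLin' (M - mu • 1) with hg
  have hfg : f.comp g = 0 := by
    rw [hf, hg, ← Matrix.toLin'_mul, h]
    simp
  have hle : LinearMap.range g ≤ LinearMap.ker f :=
    LinearMap.range_le_ker_iff.mpr hfg
  have hrank := LinearMap.finrank_range_add_finrank_ker g
  have hdim : Module.finrank ℂ (Fin 3 → ℂ) = 3 := by simp
  have hmono : Module.finrank ℂ (LinearMap.range g) ≤
      Module.finrank ℂ (LinearMap.ker f) := Submodule.finrank_mono hle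
  rw [hdim] at hrank
  omega

theorem stmt_5 (A : Matrix.SpecialLinearGroup (Fin 3) ℂ)
    (h : ∃ a b c : ℂ, ¬(a = 0 ∧ b = 0 ∧ c = 0) ∧
        a • (↑A : Matrix (Fin 3) (Fin 3) ℂ) + b • (1 : Matrix (Fin 3) (Fin 3) ℂ)
          + c • (↑(A⁻¹) : Matrix (Fin 3) (Fin 3) ℂ) = 0) :
    ∃ lam : ℂ, 2 ≤ Module.finrank ℂ
        (LinearMap.ker (Matrix.toLin' ((↑A : Matrix (Fin 3) (Fin 3) ℂ) - lam • 1))) := by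
  obtain ⟨a, b, c, hne, heq⟩ := h
  set M : Matrix (Fin 3) (Fin 3) ℂ := ↑A with hM
  have hinv : (↑A : Matrix (Fin 3) (Fin 3) ℂ).adjugate * M = 1 := by
    rw [hM, Matrix.adjugate_mul, Matrix.SpecialLinearGroup.det_coe, one_smul]
  have heq2 : a • (M * M) + b • M + c • (1 : Matrix (Fin 3) (Fin 3) ℂ) = 0 := by
    have := congrArg (fun X => X * M) heq
    simpa [add_mul, Matrix.smul_mul, hinv, Matrix.one_mul, Matrix.zero_mul] using this
  by_cases ha : a = 0
  · by_cases hb : b = 0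
    · exfalso
      apply hne
      refine ⟨ha, hb, ?_⟩
      subst ha hb
      simp only [zero_smul, zero_add] at heq2
      by_contra hcne
      have := congrFun (congrFun heq2 0) 0
      simp [Matrix.one_apply] at this
      exact hcne this
    · -- b • M + c • 1 = 0, so M = (-c/b) • 1
      have hM0 : M - (-(c/b)) • 1 = 0 := by
        have h0 : b • M + c • (1 : Matrix (Fin 3) (Fin 3) ℂ) = 0 := by
          simpa [ha] using heq2
        have : b • (M - (-(c/b)) • 1) = 0 := by
          rw [smul_sub, smul_smul]
          have hbc : b * (-(c/b)) = -c := by field_simp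
          rw [hbc, ← h0]
          simp [neg_smul]
        rcases smul_eq_zero.mp this with h' | h'
        · exact absurd h' hb
        · exact h'
      refine key_lemma M (-(c/b)) (-(c/b)) ?_
      rw [hM0, Matrix.zero_mul]
  · obtain ⟨s, hs⟩ := IsAlgClosed.exists_pow_nat_eq (b ^ 2 - 4 * (a * c)) (n := 2) (by norm_num)
    set lam := (-b + s) / (2 * a) with hlam
    set mu := (-b - s) / (2 * a) with hmu
    have h1 : a * (lam + mu) = -b := by
      rw [hlam, hmu]
      field_simp
      ring
    have h2 : a * (lam * mu) = c := by
      rw [hlam, hmu]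
      have h4 : (2 * a) * (2 * a) ≠ 0 :=
        mul_ne_zero (mul_ne_zero two_ne_zero ha) (mul_ne_zero two_ne_zero ha)
      rw [div_mul_div_comm, ← mul_div_assoc, div_eq_iff h4]
      linear_combination -a * hs
    have expand : (M - lam • 1) * (M - mu • 1)
        = M * M - (lam + mu) • M + (lam * mu) • 1 := by
      simp only [sub_mul, mul_sub, mul_one, one_mul, Matrix.mul_smul, Matrix.smul_mul,
        smul_smul, add_smul, mul_comm mu lam]
      abel
    have hz : a • ((M - lam • 1) * (M - mu • 1)) = 0 := by
      rw [expand]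
      have : a • (M * M - (lam + mu) • M + (lam * mu) • 1)
          = a • (M * M) - (a * (lam + mu)) • M + (a * (lam * mu)) • (1 : Matrix (Fin 3) (Fin 3) ℂ) := by
        simp [smul_sub, smul_add, smul_smul]
      rw [this, h1, h2, ← heq2]
      module
    have hprod : (M - lam • 1) * (M - mu • 1) = 0 := by
      rcases smul_eq_zero.mp hz with h' | h'
      · exact absurd h' ha
      · exact h'
    exact key_lemma M lam mu hprod
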